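/- There exists a constant d (depending only on the universal machine) such that for every n and every AM protocol Π = {Π_r}_{r ∈ S} over {0,1}^n × {0,1}^n that computes f(x,y) = x ⊕ y (bitwise XOR), the communication cost of Π satisfies log₂(max_{r ∈ S} |𝓡_r|) ≥ 2n − log₂ ρ(Π) − d. -/

import Mathlib

/-- A machine maps a program and a condition string to at most one output string. -/
abbrev Machine := List Bool → List Bool →. List Bool

/-- Conditional Kolmogorov complexity relative to machine `U`. -/
noncomputable def KC (U : Machine) (x u : List Bool) : ℕ :=
  sInf { k | ∃ p : List Bool, p.length = k ∧ x ∈ U p u }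

/-- `U` is a universal machine. -/
def IsUniversal (U : Machine) : Prop :=
  Partrec₂ U ∧
    ∀ V : Machine, Partrec₂ V →
      ∃ c : ℕ, ∀ p u x, x ∈ V p u → ∃ q : List Bool, x ∈ U q u ∧ q.length ≤ p.length + c

/-- Self-delimiting encoding of a string. -/
def eBits (x : List Bool) : List Bool := (x.map fun b => [b, b]).flatten ++ [true, false]

/-- The fixed computable pairing of strings. -/
def ePair (x y : List Bool) : List Bool := eBits x ++ y

/-- Encoding of a list of strings. -/
def eList (l : List (List Bool)) : List Bool := (l.map eBits).flatten

/-- Conditional mutual information `I(x : y ∣ u)`. -/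
noncomputable def MI (U : Machine) (x y u : List Bool) : ℝ :=
  (KC U x u : ℝ) + KC U y u - KC U (ePair x y) u

/-- Conditional triple information `I(x : y : w ∣ u)`. -/
noncomputable def TI (U : Machine) (x y w u : List Bool) : ℝ :=
  (KC U x u : ℝ) + KC U y u + KC U w u - KC U (ePair x y) u - KC U (ePair x w) u
    - KC U (ePair y w) u + KC U (ePair x (ePair y w)) u

/-- A combinatorial rectangle, given by its list of rows and list of columns. -/
structure Rect where
  rows : List (List Bool)
  cols : List (List Bool)
deriving DecidableEq

/-- Canonical encoding of a rectangle. -/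
def encRect (R : Rect) : List Bool := ePair (eList R.rows) (eList R.cols)

/-- The list of all bit strings of length `n`. -/
def allBV : ℕ → List (List Bool)
  | 0 => [[]]
  | n + 1 => (allBV n).flatMap fun x => [false :: x, true :: x]

/-- A nondeterministic communication protocol over `{0,1}^{n₁} × {0,1}^{n₂}`:
a finite family of rectangles covering the domain together with a transcript
function selecting, for every cell of the domain, a rectangle containing it. -/
structure Protocol (n₁ n₂ : ℕ) where
  rects : List Rect
  trans : List Bool → List Bool → Rect
  rows_len : ∀ R ∈ rects, ∀ s ∈ R.rows, s.length = n₁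
  cols_len : ∀ R ∈ rects, ∀ s ∈ R.cols, s.length = n₂
  trans_mem : ∀ x y : List Bool, x.length = n₁ → y.length = n₂ → trans x y ∈ rects
  trans_row : ∀ x y : List Bool, x.length = n₁ → y.length = n₂ → x ∈ (trans x y).rows
  trans_col : ∀ x y : List Bool, x.length = n₁ → y.length = n₂ → y ∈ (trans x y).cols

/-- The thickness of a cell: the number of rectangles of the protocol containing it. -/
def cellThick {n₁ n₂ : ℕ} (P : Protocol n₁ n₂) (x y : List Bool) : ℕ :=
  P.rects.countP fun R => decide (x ∈ R.rows ∧ y ∈ R.cols)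

/-- The thickness of a rectangle: the maximal thickness of a cell of the rectangle. -/
def rectThick {n₁ n₂ : ℕ} (P : Protocol n₁ n₂) (R : Rect) : ℕ :=
  (R.rows.flatMap fun x => R.cols.map fun y => cellThick P x y).foldr max 0

/-- Canonical encoding of a protocol: the list of its rectangles followed by
the graph of the transcript function on the domain. -/
def encProt {n₁ n₂ : ℕ} (P : Protocol n₁ n₂) : List Bool :=
  ePair (eList (P.rects.map encRect))
    (eList ((allBV n₁).flatMap fun x => (allBV n₂).map fun y => encRect (P.trans x y)))

/-- A protocol with error: a protocol together with output functions of Alice and Bob. -/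
structure EProtocol (n₁ n₂ : ℕ) extends Protocol n₁ n₂ where
  gA : List Bool → Rect → List Bool
  gB : List Bool → Rect → List Bool

/-- Canonical encoding of a protocol with error. -/
def encEProt {n₁ n₂ : ℕ} (P : EProtocol n₁ n₂) : List Bool :=
  ePair (encProt P.toProtocol)
    (ePair (eList ((allBV n₁).flatMap fun x => P.rects.map fun R => P.gA x R))
           (eList ((allBV n₂).flatMap fun y => P.rects.map fun R => P.gB y R)))

/-- Bitwise XOR of two bit strings. -/
def xorStr (x y : List Bool) : List Bool := List.zipWith xor x y

/-- The thickness of a protocol: the maximal thickness of a cell of the domain. -/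
def protThick {n₁ n₂ : ℕ} (P : Protocol n₁ n₂) : ℕ :=
  ((allBV n₁).flatMap fun x => (allBV n₂).map fun y => cellThick P x y).foldr max 0

section Helpers

lemma mem_allBV : ∀ {n : ℕ} {x : List Bool}, x ∈ allBV n ↔ x.length = n := by
  intro n
  induction n with
  | zero => intro x; simp [allBV, List.length_eq_zero_iff]
  | succ n ih =>
    intro x
    simp only [allBV, List.mem_flatMap, List.mem_cons, List.mem_singleton]
    constructor
    · rintro ⟨a, ha, rfl | rfl | h⟩ <;> simp_all [ih.mp ha]
    · intro hx
      match x with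
      | [] => simp at hx
      | b :: t =>
        refine ⟨t, ih.mpr (by simpa using hx), ?_⟩
        cases b <;> simp

lemma nodup_allBV (n : ℕ) : (allBV n).Nodup := by
  induction n with
  | zero => simp [allBV]
  | succ n ih =>
    rw [allBV, List.nodup_flatMap]
    refine ⟨fun x _ => by simp, ?_⟩
    refine ih.imp ?_
    intro a b hab
    simp only [Function.onFun, List.Disjoint, List.mem_cons, List.mem_singleton]
    rintro c (rfl | rfl | h) (h' | h' | h') <;> simp_all

lemma length_allBV (n : ℕ) : (allBV n).length = 2 ^ n := by
  induction n with
  | zero => rfl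
  | succ n ih =>
    rw [allBV, List.length_flatMap]
    have h2 : (List.map (fun a => [false :: a, true :: a].length) (allBV n))
        = List.map (fun _ => 2) (allBV n) := List.map_congr_left (fun x _ => rfl)
    rw [h2, List.map_const', List.sum_replicate, smul_eq_mul, ih, pow_succ, Nat.mul_comm]

lemma xorStr_right_cancel : ∀ {x y z : List Bool}, y.length = x.length → z.length = x.length →
    xorStr x y = xorStr x z → y = z := by
  intro x
  induction x with
  | nil => intro y z hy hz _; rw [List.length_eq_zero_iff.mp hy, List.length_eq_zero_iff.mp hz]
  | cons a x ih =>
    intro y z hy hz h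
    match y, z with
    | b :: y, c :: z =>
      simp only [xorStr, List.zipWith_cons_cons, List.cons.injEq] at h
      have hbc : b = c := by cases a <;> cases b <;> cases c <;> simp_all
      simp only [List.length_cons, Nat.add_right_cancel_iff] at hy hz
      exact hbc ▸ (ih hy hz h.2) ▸ rfl

lemma xorStr_left_cancel : ∀ {x y z : List Bool}, y.length = x.length → z.length = x.length →
    xorStr y x = xorStr z x → y = z := by
  intro x
  induction x with
  | nil => intro y z hy hz _; rw [List.length_eq_zero_iff.mp hy, List.length_eq_zero_iff.mp hz]
  | cons a x ih =>
    intro y z hy hz h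
    match y, z with
    | b :: y, c :: z =>
      simp only [xorStr, List.zipWith_cons_cons, List.cons.injEq] at h
      have hbc : b = c := by cases a <;> cases b <;> cases c <;> simp_all
      simp only [List.length_cons, Nat.add_right_cancel_iff] at hy hz
      exact hbc ▸ (ih hy hz h.2) ▸ rfl

lemma le_foldr_max : ∀ {l : List ℕ} {a : ℕ}, a ∈ l → a ≤ l.foldr max 0 := by
  intro l
  induction l with
  | nil => intro a h; simp at h
  | cons b l ih =>
    intro a h
    rcases List.mem_cons.mp h with rfl | h
    · exact le_max_left _ _
    · exact le_trans (ih h) (le_max_right _ _)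

lemma countP_eq_sum_map {α} (l : List α) (p : α → Bool) :
    l.countP p = (l.map fun a => if p a then 1 else 0).sum := by
  induction l with
  | nil => rfl
  | cons a l ih => by_cases h : p a <;> simp [List.countP_cons, h, ih, Nat.add_comm]

lemma list_sum_finset_sum {α β} (l : List α) (s : Finset β) (g : α → β → ℕ) :
    (l.map fun a => ∑ b ∈ s, g a b).sum = ∑ b ∈ s, (l.map fun a => g a b).sum := by
  induction l with
  | nil => simp
  | cons a l ih => simp [ih, Finset.sum_add_distrib]

lemma ite_one_zero_mul {p q : Prop} [Decidable p] [Decidable q] :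
    (if p then (1:ℕ) else 0) * (if q then 1 else 0) = if p ∧ q then 1 else 0 := by
  by_cases hp : p <;> by_cases hq : q <;> simp [hp, hq]

end Helpers

/-- Any AM protocol computing bitwise XOR has communication cost at least
`2n - log₂ ρ(Π) - d`. -/
theorem stmt11 (U : Machine) (hU : IsUniversal U) :
    ∃ d : ℝ, ∀ n m : ℕ, 0 < m → ∀ Pr : Fin m → EProtocol n n,
      (∀ x y : List Bool, x.length = n → y.length = n →
        ((Finset.univ.filter fun r : Fin m =>
            (Pr r).gA x ((Pr r).trans x y) = xorStr x y ∧
            (Pr r).gB y ((Pr r).trans x y) = xorStr x y).card : ℝ) ≥ (2 / 3) * m) →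
      Real.logb 2 ((Finset.univ.sup fun r : Fin m => (Pr r).rects.length : ℕ) : ℝ) ≥
        2 * n - Real.logb 2 ((Finset.univ.sup fun r : Fin m => protThick (Pr r).toProtocol : ℕ) : ℝ)
          - d := by
  classical
  refine ⟨2, ?_⟩
  intro n m hm Pr hcomp
  have : Nonempty (Fin m) := ⟨⟨0, hm⟩⟩
  set D : Finset (List Bool) := (allBV n).toFinset with hD
  have hDcard : D.card = 2 ^ n := by
    rw [hD, List.toFinset_card_of_nodup (nodup_allBV n), length_allBV]
  have hmemD : ∀ x : List Bool, x ∈ D ↔ x.length = n := fun x => by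
    simp [hD, mem_allBV]
  set M : ℕ := Finset.univ.sup fun r : Fin m => (Pr r).rects.length with hM
  set Rho : ℕ := Finset.univ.sup fun r : Fin m => protThick (Pr r).toProtocol with hRho
  -- the good cells of each seed
  set Gd : Fin m → Finset (List Bool × List Bool) := fun r =>
    (D ×ˢ D).filter fun p =>
      (Pr r).gA p.1 ((Pr r).trans p.1 p.2) = xorStr p.1 p.2 ∧
      (Pr r).gB p.2 ((Pr r).trans p.1 p.2) = xorStr p.1 p.2 with hGd
  -- double counting / pigeonhole: some seed has many good cells
  have hswap : ∑ r : Fin m, (Gd r).card = ∑ p ∈ D ×ˢ D,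
      (Finset.univ.filter fun r : Fin m =>
        (Pr r).gA p.1 ((Pr r).trans p.1 p.2) = xorStr p.1 p.2 ∧
        (Pr r).gB p.2 ((Pr r).trans p.1 p.2) = xorStr p.1 p.2).card := by
    simp only [hGd, Finset.card_filter]
    exact Finset.sum_comm
  have hlower : (m : ℝ) * ((2:ℝ)/3 * (2^n * 2^n)) ≤ ∑ r : Fin m, ((Gd r).card : ℝ) := by
    have hle : ∀ p ∈ D ×ˢ D, (2:ℝ)/3 * m ≤
        ((Finset.univ.filter fun r : Fin m =>
          (Pr r).gA p.1 ((Pr r).trans p.1 p.2) = xorStr p.1 p.2 ∧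
          (Pr r).gB p.2 ((Pr r).trans p.1 p.2) = xorStr p.1 p.2).card : ℝ) := by
      intro p hp
      obtain ⟨h1, h2⟩ := Finset.mem_product.mp hp
      exact hcomp p.1 p.2 ((hmemD _).mp h1) ((hmemD _).mp h2)
    calc (m : ℝ) * ((2:ℝ)/3 * (2^n * 2^n))
        = ∑ _p ∈ D ×ˢ D, (2:ℝ)/3 * m := by
          rw [Finset.sum_const, Finset.card_product, hDcard]
          push_cast
          ring
      _ ≤ ∑ p ∈ D ×ˢ D, ((Finset.univ.filter fun r : Fin m =>
            (Pr r).gA p.1 ((Pr r).trans p.1 p.2) = xorStr p.1 p.2 ∧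
            (Pr r).gB p.2 ((Pr r).trans p.1 p.2) = xorStr p.1 p.2).card : ℝ) :=
          Finset.sum_le_sum hle
      _ = ∑ r : Fin m, ((Gd r).card : ℝ) := by
          rw [← Nat.cast_sum, ← Nat.cast_sum, hswap]
  obtain ⟨r, -, hr⟩ : ∃ r ∈ (Finset.univ : Finset (Fin m)),
      (2:ℝ)/3 * (2^n * 2^n) ≤ ((Gd r).card : ℝ) := by
    apply Finset.exists_le_of_sum_le Finset.univ_nonempty
    rw [Finset.sum_const, Finset.card_univ, Fintype.card_fin, nsmul_eq_mul]
    exact hlower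
  -- decompose the good cells of seed r according to the transcript rectangle
  set gc : Rect → Finset (List Bool × List Bool) := fun R =>
    (Gd r).filter fun p => (Pr r).trans p.1 p.2 = R with hgc
  have hfib : (Gd r).card = ∑ R ∈ (Pr r).rects.toFinset, (gc R).card := by
    apply Finset.card_eq_sum_card_fiberwise
    intro p hp
    obtain ⟨h1, h2⟩ := Finset.mem_product.mp (Finset.mem_filter.mp hp).1
    exact List.mem_toFinset.mpr
      ((Pr r).trans_mem p.1 p.2 ((hmemD _).mp h1) ((hmemD _).mp h2))
  -- in each rectangle, the good cells form a matching
  have hmatch : ∀ R : Rect, (gc R).card ^ 2 ≤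
      (D.filter (· ∈ R.rows)).card * (D.filter (· ∈ R.cols)).card := by
    intro R
    have hlen : ∀ p ∈ gc R, p.1.length = n ∧ p.2.length = n := by
      intro p hp
      obtain ⟨h1, h2⟩ := Finset.mem_product.mp
        (Finset.mem_filter.mp (Finset.mem_filter.mp hp).1).1
      exact ⟨(hmemD _).mp h1, (hmemD _).mp h2⟩
    have hgood : ∀ p ∈ gc R,
        (Pr r).gA p.1 R = xorStr p.1 p.2 ∧ (Pr r).gB p.2 R = xorStr p.1 p.2 := by
      intro p hp
      have ht := (Finset.mem_filter.mp hp).2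
      have hg := (Finset.mem_filter.mp (Finset.mem_filter.mp hp).1).2
      rw [ht] at hg
      exact hg
    have hA : (gc R).card ≤ (D.filter (· ∈ R.rows)).card := by
      apply Finset.card_le_card_of_injOn (fun p => p.1)
      · intro p hp
        obtain ⟨h1, h2⟩ := hlen p hp
        have ht := (Finset.mem_filter.mp hp).2
        refine Finset.mem_filter.mpr ⟨(hmemD _).mpr h1, ?_⟩
        have := (Pr r).trans_row p.1 p.2 h1 h2
        rwa [ht] at this
      · intro p hp q hq hpq
        have hpq' : p.1 = q.1 := hpq
        obtain ⟨hp1, hp2⟩ := hlen p hp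
        obtain ⟨hq1, hq2⟩ := hlen q hq
        have h1 := (hgood p hp).1
        have h2 := (hgood q hq).1
        rw [hpq'] at h1
        rw [h2] at h1
        have h3 : q.2 = p.2 := xorStr_right_cancel (by rw [hq2, hq1])
          (by rw [hp2, hq1]) h1
        exact Prod.ext hpq' h3.symm
    have hB : (gc R).card ≤ (D.filter (· ∈ R.cols)).card := by
      apply Finset.card_le_card_of_injOn (fun p => p.2)
      · intro p hp
        obtain ⟨h1, h2⟩ := hlen p hp
        have ht := (Finset.mem_filter.mp hp).2
        refine Finset.mem_filter.mpr ⟨(hmemD _).mpr h2, ?_⟩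
        have := (Pr r).trans_col p.1 p.2 h1 h2
        rwa [ht] at this
      · intro p hp q hq hpq
        have hpq' : p.2 = q.2 := hpq
        obtain ⟨hp1, hp2⟩ := hlen p hp
        obtain ⟨hq1, hq2⟩ := hlen q hq
        have h1 := (hgood p hp).2
        have h2 := (hgood q hq).2
        rw [hpq'] at h1
        rw [h2] at h1
        have h3 : q.1 = p.1 := xorStr_left_cancel (by rw [hq1, hq2])
          (by rw [hp1, hq2]) h1
        exact Prod.ext h3.symm hpq'
    calc (gc R).card ^ 2 = (gc R).card * (gc R).card := sq ((gc R).card)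
      _ ≤ _ := Nat.mul_le_mul hA hB
  -- the total (measured) area of rectangles is at most thickness * domain size
  have harea : ∑ R ∈ (Pr r).rects.toFinset,
      (D.filter (· ∈ R.rows)).card * (D.filter (· ∈ R.cols)).card ≤ 2^n * 2^n * Rho := by
    have hf : ∀ R : Rect, (D.filter (· ∈ R.rows)).card * (D.filter (· ∈ R.cols)).card
        = ∑ p ∈ D ×ˢ D, if p.1 ∈ R.rows ∧ p.2 ∈ R.cols then 1 else 0 := by
      intro R
      rw [← Finset.card_product, ← Finset.filter_product, Finset.card_filter]
    have h1 : ∑ R ∈ (Pr r).rects.toFinset,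
        (D.filter (· ∈ R.rows)).card * (D.filter (· ∈ R.cols)).card
        ≤ ((Pr r).rects.map fun R =>
            (D.filter (· ∈ R.rows)).card * (D.filter (· ∈ R.cols)).card).sum := by
      rw [Finset.sum_list_map_count]
      apply Finset.sum_le_sum
      intro R hR
      have hc : 1 ≤ (Pr r).rects.count R := by
        rw [Nat.one_le_iff_ne_zero, ← Nat.pos_iff_ne_zero, List.count_pos_iff]
        exact List.mem_toFinset.mp hR
      calc (D.filter (· ∈ R.rows)).card * (D.filter (· ∈ R.cols)).card
          = 1 * _ := (one_mul _).symm
        _ ≤ (Pr r).rects.count R • _ := by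
            rw [smul_eq_mul]; exact Nat.mul_le_mul_right _ hc
    have h2 : ((Pr r).rects.map fun R =>
        (D.filter (· ∈ R.rows)).card * (D.filter (· ∈ R.cols)).card).sum
        = ∑ p ∈ D ×ˢ D, cellThick (Pr r).toProtocol p.1 p.2 := by
      rw [List.map_congr_left (fun R _ => hf R), list_sum_finset_sum]
      apply Finset.sum_congr rfl
      intro p _
      rw [cellThick, countP_eq_sum_map]
      congr 1
      apply List.map_congr_left
      intro R _
      simp only [decide_eq_true_eq]
    have h3 : ∑ p ∈ D ×ˢ D, cellThick (Pr r).toProtocol p.1 p.2 ≤ 2^n * 2^n * Rho := by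
      have hb : ∀ p ∈ D ×ˢ D, cellThick (Pr r).toProtocol p.1 p.2 ≤ Rho := by
        intro p hp
        obtain ⟨h1', h2'⟩ := Finset.mem_product.mp hp
        have hx : p.1 ∈ allBV n := List.mem_toFinset.mp h1'
        have hy : p.2 ∈ allBV n := List.mem_toFinset.mp h2'
        have hmem : cellThick (Pr r).toProtocol p.1 p.2 ∈
            (allBV n).flatMap fun x => (allBV n).map fun y =>
              cellThick (Pr r).toProtocol x y := by
          rw [List.mem_flatMap]
          exact ⟨p.1, hx, List.mem_map.mpr ⟨p.2, hy, rfl⟩⟩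
        calc cellThick (Pr r).toProtocol p.1 p.2
            ≤ protThick (Pr r).toProtocol := le_foldr_max hmem
          _ ≤ Rho := Finset.le_sup (f := fun r : Fin m => protThick (Pr r).toProtocol) (Finset.mem_univ r)
      calc ∑ p ∈ D ×ˢ D, cellThick (Pr r).toProtocol p.1 p.2
          ≤ ∑ _p ∈ D ×ˢ D, Rho := Finset.sum_le_sum hb
        _ = 2^n * 2^n * Rho := by
            rw [Finset.sum_const, Finset.card_product, hDcard, smul_eq_mul]
    calc _ ≤ _ := h1
      _ = _ := h2
      _ ≤ _ := h3
  -- basic positivity facts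
  have hx0 : (List.replicate n false).length = n := List.length_replicate
  have hM1 : 1 ≤ M := by
    have := (Pr r).trans_mem _ _ hx0 hx0
    have hne : (Pr r).rects ≠ [] := by
      intro h; rw [h] at this; exact absurd this List.not_mem_nil
    calc 1 ≤ (Pr r).rects.length := by
          rwa [Nat.one_le_iff_ne_zero, Ne, List.length_eq_zero_iff]
      _ ≤ M := Finset.le_sup (f := fun r : Fin m => (Pr r).rects.length) (Finset.mem_univ r)
  have hR1 : 1 ≤ Rho := by
    have hct : 1 ≤ cellThick (Pr r).toProtocol (List.replicate n false) (List.replicate n false) := by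
      rw [Nat.one_le_iff_ne_zero, ← Nat.pos_iff_ne_zero, cellThick, List.countP_pos_iff]
      refine ⟨(Pr r).trans _ _, (Pr r).trans_mem _ _ hx0 hx0, ?_⟩
      simp only [decide_eq_true_eq]
      exact ⟨(Pr r).trans_row _ _ hx0 hx0, (Pr r).trans_col _ _ hx0 hx0⟩
    have hmem : cellThick (Pr r).toProtocol (List.replicate n false) (List.replicate n false) ∈
        (allBV n).flatMap fun x => (allBV n).map fun y => cellThick (Pr r).toProtocol x y := by
      rw [List.mem_flatMap]
      exact ⟨_, mem_allBV.mpr hx0, List.mem_map.mpr ⟨_, mem_allBV.mpr hx0, rfl⟩⟩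
    calc 1 ≤ _ := hct
      _ ≤ protThick (Pr r).toProtocol := le_foldr_max hmem
      _ ≤ Rho := Finset.le_sup (f := fun r : Fin m => protThick (Pr r).toProtocol) (Finset.mem_univ r)
  -- Cauchy-Schwarz: combine everything
  have hRS : (Pr r).rects.toFinset.card ≤ M :=
    le_trans (List.toFinset_card_le _) (Finset.le_sup (f := fun r : Fin m => (Pr r).rects.length) (Finset.mem_univ r))
  have hcsN : (Gd r).card ^ 2 ≤ M * (2^n * 2^n * Rho) := by
    have c1 : (Gd r).card ^ 2 ≤ (Pr r).rects.toFinset.card *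
        ∑ R ∈ (Pr r).rects.toFinset, (gc R).card ^ 2 := by
      rw [hfib]
      exact sq_sum_le_card_mul_sum_sq
    have c2 : ∑ R ∈ (Pr r).rects.toFinset, (gc R).card ^ 2 ≤ 2^n * 2^n * Rho :=
      le_trans (Finset.sum_le_sum fun R _ => hmatch R) harea
    exact le_trans c1 (Nat.mul_le_mul hRS c2)
  have hcs : (((Gd r).card : ℝ)) ^ 2 ≤ (M : ℝ) * ((2:ℝ)^n * 2^n * Rho) := by
    exact_mod_cast hcsN
  have hAA : (0:ℝ) < 2^n * 2^n := by positivity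
  have hMR : ((2:ℝ)^n * 2^n) / 4 ≤ (M : ℝ) * Rho := by
    have h4 : ((2:ℝ)/3 * (2^n*2^n))^2 ≤ (((Gd r).card : ℝ))^2 :=
      pow_le_pow_left₀ (by positivity) hr 2
    have h7 : (4:ℝ)/9*((2^n*2^n)*((2:ℝ)^n*2^n)) ≤ ((M:ℝ)*Rho)*(2^n*2^n) := by
      have e1 : ((2:ℝ)/3 * (2^n*2^n))^2 = 4/9*((2^n*2^n)*((2:ℝ)^n*2^n)) := by ring
      have e2 : (M:ℝ) * ((2:ℝ)^n * 2^n * Rho) = ((M:ℝ)*Rho)*(2^n*2^n) := by ring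
      rw [← e1, ← e2]
      exact le_trans h4 hcs
    have h8 : ((2:ℝ)^n*2^n/4)*(2^n*2^n) ≤ (4:ℝ)/9*((2^n*2^n)*((2:ℝ)^n*2^n)) := by
      have hx : (0:ℝ) ≤ (2^n*2^n)*((2:ℝ)^n*2^n) := by positivity
      have e3 : ((2:ℝ)^n*2^n/4)*(2^n*2^n) = 1/4*((2^n*2^n)*((2:ℝ)^n*2^n)) := by ring
      rw [e3]
      linarith
    exact le_of_mul_le_mul_right (le_trans h8 h7) hAA
  have hMpos : (0:ℝ) < M := by exact_mod_cast hM1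
  have hRpos : (0:ℝ) < Rho := by exact_mod_cast hR1
  have hlog1 : Real.logb 2 ((2:ℝ)^n * 2^n / 4) ≤ Real.logb 2 ((M:ℝ) * Rho) :=
    Real.logb_le_logb_of_le one_lt_two (by positivity) hMR
  have hlog2 : Real.logb 2 ((2:ℝ)^n * 2^n / 4) = 2 * n - 2 := by
    have : (2:ℝ)^n * 2^n / 4 = 2^(2*n) / 2^2 := by rw [two_mul, pow_add]; norm_num
    rw [this, Real.logb_div (by positivity) (by positivity),
      Real.logb_pow, Real.logb_pow, Real.logb_self_eq_one one_lt_two]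
    push_cast
    ring
  have hlog3 : Real.logb 2 ((M:ℝ) * Rho) = Real.logb 2 M + Real.logb 2 Rho :=
    Real.logb_mul (ne_of_gt hMpos) (ne_of_gt hRpos)
  rw [ge_iff_le]
  linarith [hlog1, hlog2 ▸ hlog1, hlog3]
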